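/- Let G be a connected P_k-free graph with k ≥ 4, and let X be a minimum connected dominating set of G (a connected dominating set of minimum cardinality). Then the induced subgraph G_X is P_{k-2}-free or isomorphic to the path P_{k-2}. -/

import Mathlib

open SimpleGraph

/-- The join of two simple graphs on disjoint vertex sets. -/
def joinG {V1 V2 : Type} (G1 : SimpleGraph V1) (G2 : SimpleGraph V2) :
    SimpleGraph (V1 ⊕ V2) where
  Adj a b :=
    match a, b with
    | Sum.inl x, Sum.inl y => G1.Adj x y
    | Sum.inr x, Sum.inr y => G2.Adj x y
    | Sum.inl _, Sum.inr _ => True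
    | Sum.inr _, Sum.inl _ => True
  symm := by
    constructor
    intro a b h
    cases a <;> cases b <;> simp_all <;> exact h.symm
  loopless := by
    constructor
    intro a
    cases a <;> simp

/-- A graph `G` contains an induced copy of the path on `k` vertices iff there is a
graph embedding (= isomorphism onto an induced subgraph) of `pathGraph k` into `G`. -/
def HasInducedPathOn {V : Type} (G : SimpleGraph V) (k : ℕ) : Prop :=
  Nonempty (SimpleGraph.pathGraph k ↪g G)

/-- `G` is `P_k`-free. -/
def PFree {V : Type} (G : SimpleGraph V) (k : ℕ) : Prop :=
  ¬ HasInducedPathOn G k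

/-- Length (number of edges) of a longest induced path of `G`. -/
noncomputable def longestInducedPathLen {V : Type} (G : SimpleGraph V) : ℕ :=
  sSup {k : ℕ | HasInducedPathOn G (k + 1)}

/-- `X` is a dominating set of `G`. -/
def IsDomSet {V : Type} (G : SimpleGraph V) (X : Set V) : Prop :=
  ∀ v ∉ X, ∃ u ∈ X, G.Adj v u

/-- `X` is a connected dominating set of `G`. -/
def IsConnDomSet {V : Type} (G : SimpleGraph V) (X : Set V) : Prop :=
  IsDomSet G X ∧ (G.induce X).Connected

/-- A minimum connected dominating set. -/
def IsMinimumConnDomSet {V : Type} (G : SimpleGraph V) (X : Set V) : Prop :=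
  IsConnDomSet G X ∧ ∀ Y : Set V, IsConnDomSet G Y → X.ncard ≤ Y.ncard

/-- Weakly closed graph: it admits a labeling of its vertices such that whenever
`{a,b}` is an edge and `c` has a label strictly between those of `a` and `b`,
then `c` is adjacent to `a` or to `b`. -/
def WeaklyClosed {V : Type} [Fintype V] (G : SimpleGraph V) : Prop :=
  ∃ e : V ≃ Fin (Fintype.card V),
    ∀ a b c : V, G.Adj a b → e a < e c → e c < e b → (G.Adj a c ∨ G.Adj b c)

/-- Number of connected components. -/
noncomputable def numComp {V : Type} (G : SimpleGraph V) : ℕ :=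
  Nat.card G.ConnectedComponent

/-- The collection `C(G)` of sets with the cut point property, together with `∅`. -/
def cutSets {V : Type} (G : SimpleGraph V) : Set (Set V) :=
  {(∅ : Set V)} ∪
    {T : Set V | T ⊂ Set.univ ∧ ∀ i ∈ T,
      numComp (G.induce (Tᶜ ∪ {i})) < numComp (G.induce Tᶜ)}

/-- The collection `C(H)` for the induced subgraph `H` of `G` on a subset `W`,
viewed as a collection of subsets of the ambient vertex set. -/
def relCutSets {V : Type} (G : SimpleGraph V) (W : Set V) : Set (Set V) :=
  {T : Set V | T ⊆ W ∧ (T = ∅ ∨ (T ≠ W ∧ ∀ i ∈ T,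
    numComp (G.induce ((W \ T) ∪ {i})) < numComp (G.induce (W \ T))))}

/-- `G` is `ℓ`-connected. -/
def LConnected {V : Type} [Fintype V] (G : SimpleGraph V) (ℓ : ℕ) : Prop :=
  ℓ + 1 ≤ Fintype.card V ∧
    ∀ A : Set V, A.ncard < ℓ → (G.induce Aᶜ).Connected

/-- A maximal clique of `G`. -/
def IsMaxClique {V : Type} (G : SimpleGraph V) (s : Set V) : Prop :=
  G.IsClique s ∧ ∀ t : Set V, G.IsClique t → s ⊆ t → s = t

/-- An induced path on `n` vertices inside the set `S`, given as a vertex function. -/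
def csIsIP {V : Type} (G : SimpleGraph V) (S : Set V) {n : ℕ} (w : Fin n → V) : Prop :=
  (∀ i, w i ∈ S) ∧ Function.Injective w ∧
    (∀ i j : Fin n, G.Adj (w i) (w j) ↔ (i.val + 1 = j.val ∨ j.val + 1 = i.val))

namespace CSproof

variable {V : Type} {G : SimpleGraph V}

lemma csIsIP_mono {S T : Set V} (h : S ⊆ T) {n : ℕ} {w : Fin n → V}
    (hw : csIsIP G S w) : csIsIP G T w :=
  ⟨fun i => h (hw.1 i), hw.2.1, hw.2.2⟩

/-- reversal of a path -/
lemma csIsIP_rev {S : Set V} {n : ℕ} {w : Fin n → V} (hw : csIsIP G S w) :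
    csIsIP G S (fun i : Fin n => w ⟨n - 1 - i.val, by have := i.2; omega⟩) := by
  obtain ⟨hmem, hinj, hadj⟩ := hw
  refine ⟨fun i => hmem _, ?_, ?_⟩
  · intro i j hij
    have h2 : n - 1 - i.val = n - 1 - j.val := congrArg Fin.val (hinj hij)
    have hi := i.2; have hj := j.2
    exact Fin.ext (by omega)
  · intro i j
    rw [hadj]
    simp only [Fin.val_mk]
    have hi := i.2; have hj := j.2
    constructor <;> (intro h; omega)

/-- A `P_k`-free graph admits no induced path function on `k` vertices. -/
lemma not_csIsIP_of_pfree {k : ℕ} (hfree : PFree G k) (w : Fin k → V) :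
    ¬ csIsIP G Set.univ w := by
  rintro ⟨-, hinj, hadj⟩
  exact hfree ⟨⟨⟨w, hinj⟩, by
    intro a b
    simpa [pathGraph_adj] using hadj a b⟩⟩

end CSproof
-- continues A
namespace CSproof

variable {V : Type} {G : SimpleGraph V}

/-- Prepend a vertex to an induced path. -/
lemma csIsIP_prepend {S : Set V} {n : ℕ} (hn : 0 < n) {w : Fin n → V} (hw : csIsIP G S w)
    {c : V} (hc : c ∈ S)
    (h0 : G.Adj c (w ⟨0, hn⟩))
    (hno : ∀ i : Fin n, 0 < i.val → ¬ G.Adj c (w i))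
    (hne : ∀ i : Fin n, c ≠ w i) :
    csIsIP G S (fun i : Fin (n+1) =>
      if h : i.val = 0 then c else w ⟨i.val - 1, by have := i.2; omega⟩) := by
  obtain ⟨hmem, hinj, hadj⟩ := hw
  refine ⟨?_, ?_, ?_⟩
  · intro i
    by_cases h : i.val = 0 <;> simp [h, hc, hmem]
  · intro i j hij
    simp only at hij
    by_cases hi : i.val = 0 <;> by_cases hj : j.val = 0
    · exact Fin.ext (by omega)
    · rw [dif_pos hi, dif_neg hj] at hij; exact absurd hij (hne _)
    · rw [dif_neg hi, dif_pos hj] at hij; exact absurd hij.symm (hne _)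
    · rw [dif_neg hi, dif_neg hj] at hij
      have h4 := congrArg Fin.val (hinj hij)
      simp only [Fin.val_mk] at h4
      have h2 := i.2; have h3 := j.2
      exact Fin.ext (by omega)
  · intro i j
    dsimp only
    by_cases hi : i.val = 0 <;> by_cases hj : j.val = 0
    · rw [dif_pos hi, dif_pos hj]
      simp only [G.irrefl, false_iff]
      omega
    · rw [dif_pos hi, dif_neg hj]
      constructor
      · intro h
        by_cases h1 : j.val = 1
        · left; omega
        · refine absurd h (hno _ ?_)
          simp only [Fin.val_mk]
          omega
      · intro h
        have hj1 : j.val = 1 := by omega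
        have he : (⟨j.val - 1, by have := j.2; omega⟩ : Fin n) = ⟨0, hn⟩ := by
          apply Fin.ext; simp only [Fin.val_mk]; omega
        rw [he]; exact h0
    · rw [dif_neg hi, dif_pos hj]
      constructor
      · intro h
        by_cases h1 : i.val = 1
        · right; omega
        · refine absurd h.symm (hno _ ?_)
          simp only [Fin.val_mk]
          omega
      · intro h
        have hi1 : i.val = 1 := by omega
        have he : (⟨i.val - 1, by have := i.2; omega⟩ : Fin n) = ⟨0, hn⟩ := by
          apply Fin.ext; simp only [Fin.val_mk]; omega
        rw [he]; exact h0.symm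
    · rw [dif_neg hi, dif_neg hj, hadj]
      simp only [Fin.val_mk]
      have h2 := i.2; have h3 := j.2
      constructor <;> (intro h; omega)

/-- Append a vertex to an induced path. -/
lemma csIsIP_append {S : Set V} {n : ℕ} (hn : 0 < n) {w : Fin n → V} (hw : csIsIP G S w)
    {v : V} (hv : v ∈ S)
    (hlast : G.Adj (w ⟨n-1, by omega⟩) v)
    (hno : ∀ i : Fin n, i.val < n - 1 → ¬ G.Adj v (w i))
    (hne : ∀ i : Fin n, v ≠ w i) :
    csIsIP G S (fun i : Fin (n+1) =>
      if h : i.val < n then w ⟨i.val, h⟩ else v) := by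
  obtain ⟨hmem, hinj, hadj⟩ := hw
  refine ⟨?_, ?_, ?_⟩
  · intro i
    by_cases h : i.val < n <;> simp [h, hv, hmem]
  · intro i j hij
    simp only at hij
    by_cases hi : i.val < n <;> by_cases hj : j.val < n
    · rw [dif_pos hi, dif_pos hj] at hij
      have h4 := congrArg Fin.val (hinj hij)
      simp only [Fin.val_mk] at h4
      exact Fin.ext (by omega)
    · rw [dif_pos hi, dif_neg hj] at hij; exact absurd hij.symm (hne _)
    · rw [dif_neg hi, dif_pos hj] at hij; exact absurd hij (hne _)
    · have h2 := i.2; have h3 := j.2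
      exact Fin.ext (by omega)
  · intro i j
    dsimp only
    have h2 := i.2; have h3 := j.2
    by_cases hi : i.val < n <;> by_cases hj : j.val < n
    · rw [dif_pos hi, dif_pos hj, hadj]
    · rw [dif_pos hi, dif_neg hj]
      have hjv : j.val = n := by omega
      constructor
      · intro h
        by_cases h1 : i.val = n - 1
        · left; omega
        · refine absurd h.symm (hno _ ?_)
          simp only [Fin.val_mk]
          omega
      · intro h
        have he : (⟨i.val, hi⟩ : Fin n) = ⟨n-1, by omega⟩ := by
          apply Fin.ext; simp only [Fin.val_mk]; omega
        rw [he]; exact hlast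
    · rw [dif_neg hi, dif_pos hj]
      have hiv : i.val = n := by omega
      constructor
      · intro h
        by_cases h1 : j.val = n - 1
        · right; omega
        · refine absurd h (hno _ ?_)
          simp only [Fin.val_mk]
          omega
      · intro h
        have he : (⟨j.val, hj⟩ : Fin n) = ⟨n-1, by omega⟩ := by
          apply Fin.ext; simp only [Fin.val_mk]; omega
        rw [he]; exact hlast.symm
    · rw [dif_neg hi, dif_neg hj]
      simp only [G.irrefl, false_iff]
      omega

end CSproof
namespace CSproof

variable {V : Type} {G : SimpleGraph V}

/-- Inclusion homomorphism between induced subgraphs. -/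
def inclHom {S T : Set V} (h : S ⊆ T) : G.induce S →g G.induce T where
  toFun := fun x => ⟨x.val, h x.2⟩
  map_rel' := fun hadj => by
    simp only [comap_adj, Function.Embedding.coe_subtype] at hadj ⊢
    exact hadj

lemma reach_incl {S T : Set V} (h : S ⊆ T) {a b : ↥S}
    (hr : (G.induce S).Reachable a b) :
    (G.induce T).Reachable ⟨a.val, h a.2⟩ ⟨b.val, h b.2⟩ :=
  hr.map (inclHom h)

lemma induce_adj_val {S : Set V} {a b : ↥S} (h : G.Adj a.val b.val) :
    (G.induce S).Adj a b := by
  simp only [comap_adj, Function.Embedding.coe_subtype]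
  exact h

lemma induce_adj_of_adj {S : Set V} {a b : V} (ha : a ∈ S) (hb : b ∈ S) (h : G.Adj a b) :
    (G.induce S).Adj ⟨a, ha⟩ ⟨b, hb⟩ := induce_adj_val h

lemma adj_of_induce_adj {S : Set V} {a b : ↥S} (h : (G.induce S).Adj a b) :
    G.Adj a.val b.val := by
  simpa only [comap_adj, Function.Embedding.coe_subtype] using h

/-- Chain reachability along a path inside `S'`. -/
lemma reach_chain {S' : Set V} {n : ℕ} {w : Fin n → V}
    (hadj : ∀ (l : ℕ) (h : l + 1 < n), G.Adj (w ⟨l, by omega⟩) (w ⟨l+1, h⟩))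
    {i : ℕ} (hi : i < n) {a : ↥S'} (ha : a.val = w ⟨i, hi⟩) :
    ∀ (d : ℕ) {j : ℕ} (hj : j < n), j = i + d →
      (∀ (l : ℕ) (hl : l < n), i ≤ l → l ≤ j → w ⟨l, hl⟩ ∈ S') →
      ∀ {b : ↥S'}, b.val = w ⟨j, hj⟩ → (G.induce S').Reachable a b := by
  intro d
  induction d with
  | zero =>
      intro j hj hji _ b hb
      have : a = b := Subtype.ext (by rw [ha, hb]; congr 1; exact Fin.ext (by simp [hji]))
      rw [this]
  | succ d ih =>
      intro j hj hji hmem b hb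
      have hj' : i + d < n := by omega
      have hb' : w ⟨i + d, hj'⟩ ∈ S' := hmem _ _ (by omega) (by omega)
      have hmid : (G.induce S').Reachable a ⟨w ⟨i+d, hj'⟩, hb'⟩ :=
        ih hj' rfl (fun l hl h1 h2 => hmem l hl h1 (by omega)) rfl
      have hstep : (G.induce S').Adj ⟨w ⟨i+d, hj'⟩, hb'⟩ b := by
        apply induce_adj_val
        rw [hb]
        have : (⟨j, hj⟩ : Fin n) = ⟨i + d + 1, by omega⟩ := Fin.ext (by simp; omega)
        rw [this]
        exact hadj (i+d) (by omega)
      exact hmid.trans hstep.reachable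

/-- From a walk ending at `x` in `G[S]`, extract a neighbor `c` of `x` reachable from the start
in `G[S \ {x}]`. -/
lemma peel_aux {S : Set V} {x : V} {y z : ↥S} (wk : (G.induce S).Walk y z) :
    z.val = x → (y.val = x ∨ ∃ c : ↥(S \ {x}), G.Adj x c.val ∧
      ∀ (hy : y.val ∈ S \ {x}), (G.induce (S \ {x})).Reachable ⟨y.val, hy⟩ c) := by
  induction wk with
  | nil => intro h; left; exact h
  | @cons u v _ h q ih =>
      intro hzx
      by_cases hux : u.val = x
      · left; exact hux
      · right
        by_cases hvx : v.val = x
        · refine ⟨⟨u.val, ⟨u.2, hux⟩⟩, ?_, ?_⟩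
          · have h2 := adj_of_induce_adj h
            rw [hvx] at h2
            exact h2.symm
          · intro hy
            exact Reachable.refl _
        · rcases ih hzx with h1 | ⟨c, hc1, hc2⟩
          · exact absurd h1 hvx
          · refine ⟨c, hc1, fun hy => ?_⟩
            have hstep : (G.induce (S \ {x})).Adj ⟨u.val, hy⟩ ⟨v.val, ⟨v.2, hvx⟩⟩ :=
              induce_adj_val (adj_of_induce_adj h)
            exact hstep.reachable.trans (hc2 ⟨v.2, hvx⟩)

/-- Insert an attached vertex into a connected induced subgraph. -/
lemma conn_insert {S : Set V} (hS : (G.induce S).Connected) {p b : V} (hb : b ∈ S)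
    (hpb : G.Adj p b) : (G.induce (insert p S)).Connected := by
  have hsub : S ⊆ insert p S := Set.subset_insert p S
  have hbmem : b ∈ insert p S := hsub hb
  have key : ∀ y : ↥(insert p S), (G.induce (insert p S)).Reachable y ⟨b, hbmem⟩ := by
    rintro ⟨y, hy⟩
    rcases Set.mem_insert_iff.mp hy with h1 | h1
    · subst h1
      exact (induce_adj_of_adj _ _ hpb).reachable
    · exact reach_incl hsub (hS.preconnected ⟨y, h1⟩ ⟨b, hb⟩)
  rw [connected_iff]
  exact ⟨fun u v => (key u).trans (key v).symm, ⟨⟨b, hbmem⟩⟩⟩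

/-- A walk from inside `A` to outside `A` yields a crossing edge. -/
lemma walk_cross {S A : Set V} {a b : ↥S} (wk : (G.induce S).Walk a b)
    (ha : a.val ∈ A) (hb : b.val ∉ A) :
    ∃ u x : V, u ∈ A ∧ x ∈ S ∧ x ∉ A ∧ G.Adj u x := by
  induction wk with
  | nil => exact absurd ha hb
  | @cons u v _ h q ih =>
      by_cases hv : v.val ∈ A
      · exact ih hv hb
      · exact ⟨u.val, v.val, ha, v.2, hv, adj_of_induce_adj h⟩

end CSproof
namespace CSproof

variable {V : Type} [Fintype V] {G : SimpleGraph V}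

/-- `T` minus a vertex is not a connected dominating set (by minimality). -/
lemma remove_not_cds {Xn : ℕ} (hmin : ∀ Y : Set V, IsConnDomSet G Y → Xn ≤ Y.ncard)
    {T : Set V} (hcard : T.ncard = Xn) {x : V} (hx : x ∈ T) :
    ¬ IsConnDomSet G (T \ {x}) := by
  intro h
  have h1 := hmin _ h
  have h2 : (T \ {x}).ncard + 1 = T.ncard := Set.ncard_diff_singleton_add_one hx
  omega

/-- If removing the front end of an induced path keeps `G[T]` connected, the front end has
an external private neighbor. -/
lemma priv_front {Xn : ℕ} (hmin : ∀ Y : Set V, IsConnDomSet G Y → Xn ≤ Y.ncard)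
    {T : Set V} (hT : IsConnDomSet G T) (hcard : T.ncard = Xn)
    {n : ℕ} (hn : 2 ≤ n) {w : Fin n → V} (hw : csIsIP G T w)
    (hc : (G.induce (T \ {w ⟨0, by omega⟩})).Connected) :
    ∃ p, p ∉ T ∧ G.Adj p (w ⟨0, by omega⟩) ∧ ∀ t ∈ T, G.Adj p t → t = w ⟨0, by omega⟩ := by
  set x := w ⟨0, by omega⟩ with hxdef
  have hx : x ∈ T := hw.1 _
  have hnotcds := remove_not_cds hmin hcard hx
  have hdomf : ¬ IsDomSet G (T \ {x}) := fun hd => hnotcds ⟨hd, hc⟩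
  unfold IsDomSet at hdomf
  push_neg at hdomf
  obtain ⟨p, hp1, hp2⟩ := hdomf
  have h01 : G.Adj x (w ⟨1, by omega⟩) := by
    rw [hw.2.2]; left; simp
  have hw1 : w ⟨1, by omega⟩ ∈ T \ {x} := by
    refine ⟨hw.1 _, ?_⟩
    simp only [Set.mem_singleton_iff]
    intro he
    have h3 := congrArg Fin.val (hw.2.1 he)
    simp at h3
  have hpx : p ≠ x := by
    intro he
    exact hp2 _ hw1 (by rw [he]; exact h01)
  have hpT : p ∉ T := fun h => hp1 ⟨h, hpx⟩
  obtain ⟨u, huT, hpu⟩ := hT.1 p hpT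
  have hux : u = x := by
    by_contra hne
    exact hp2 u ⟨huT, hne⟩ hpu
  refine ⟨p, hpT, by rw [← hux]; exact hpu, ?_⟩
  intro t ht hadj
  by_contra hne
  exact hp2 t ⟨ht, hne⟩ hadj

/-- If removing the front end disconnects, the path extends inside `T`. -/
lemma ext_front {T : Set V} (hT : IsConnDomSet G T)
    {n : ℕ} (hn : 2 ≤ n) {w : Fin n → V} (hw : csIsIP G T w)
    (hnc : ¬ (G.induce (T \ {w ⟨0, by omega⟩})).Connected) :
    ∃ c, csIsIP G T (fun i : Fin (n+1) =>
      if h : i.val = 0 then c else w ⟨i.val - 1, by have := i.2; omega⟩) := by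
  set x := w ⟨0, by omega⟩ with hxdef
  have hx : x ∈ T := hw.1 _
  have hw1 : w ⟨1, by omega⟩ ∈ T \ {x} := by
    refine ⟨hw.1 _, ?_⟩
    simp only [Set.mem_singleton_iff]
    intro he
    have h3 := congrArg Fin.val (hw.2.1 he)
    simp at h3
  set S' := T \ {x} with hS'def
  -- there is a vertex unreachable from w 1 in G[S']
  haveI hne' : Nonempty ↥S' := ⟨⟨_, hw1⟩⟩
  have hnp : ¬ (G.induce S').Preconnected := by
    intro hp
    exact hnc (Connected.mk hp)
  unfold SimpleGraph.Preconnected at hnp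
  push_neg at hnp
  obtain ⟨u0, v0, huv⟩ := hnp
  have hy0 : ∃ y0 : ↥S', ¬ (G.induce S').Reachable ⟨w ⟨1, by omega⟩, hw1⟩ y0 := by
    by_cases h1 : (G.induce S').Reachable ⟨w ⟨1, by omega⟩, hw1⟩ u0
    · exact ⟨v0, fun h2 => huv (h1.symm.trans h2)⟩
    · exact ⟨u0, h1⟩
  obtain ⟨y0, hy0⟩ := hy0
  -- walk from y0 to x inside T
  have hreach : (G.induce T).Reachable ⟨y0.val, y0.2.1⟩ ⟨x, hx⟩ := hT.2.preconnected _ _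
  obtain ⟨wk⟩ := hreach
  rcases peel_aux wk rfl with h1 | ⟨c, hc1, hc2⟩
  · exact absurd h1 y0.2.2
  -- c is adjacent to x, and not reachable from w 1 in S'
  have hcr : ¬ (G.induce S').Reachable ⟨w ⟨1, by omega⟩, hw1⟩ c := by
    intro h2
    exact hy0 (h2.trans (hc2 y0.2).symm)
  -- chain adjacency function
  have hadjfun : ∀ (l : ℕ) (h : l + 1 < n), G.Adj (w ⟨l, by omega⟩) (w ⟨l+1, h⟩) := by
    intro l h
    rw [hw.2.2]; left; simp
  -- c is non-adjacent to all w i with i ≥ 1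
  have hno : ∀ i : Fin n, 0 < i.val → ¬ G.Adj c.val (w i) := by
    intro i hi hadj
    have hwi : w i ∈ S' := by
      refine ⟨hw.1 _, ?_⟩
      simp only [Set.mem_singleton_iff]
      intro he
      have h3 := congrArg Fin.val (hw.2.1 he)
      simp at h3
      omega
    have hchain : (G.induce S').Reachable ⟨w ⟨1, by omega⟩, hw1⟩ ⟨w i, hwi⟩ := by
      refine reach_chain hadjfun (by omega) rfl (i.val - 1) i.2 (by omega) ?_ ?_
      · intro l hl h1 h2
        refine ⟨hw.1 _, ?_⟩
        simp only [Set.mem_singleton_iff]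
        intro he
        have h3 := congrArg Fin.val (hw.2.1 he)
        simp at h3
        omega
      · congr 1
        all_goals exact Fin.ext (by simp only [Fin.val_mk]; omega)
    have hedge : (G.induce S').Adj ⟨w i, hwi⟩ c := induce_adj_val hadj.symm
    exact hcr (hchain.trans hedge.reachable)
  have hne : ∀ i : Fin n, c.val ≠ w i := by
    intro i he
    by_cases hi : i.val = 0
    · have hieq : i = ⟨0, by omega⟩ := Fin.ext (by simp [hi])
      rw [hieq] at he
      exact c.2.2 (Set.mem_singleton_iff.mpr (he.trans hxdef.symm))
    · have hwi : w i ∈ S' := by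
        refine ⟨hw.1 _, ?_⟩
        simp only [Set.mem_singleton_iff]
        intro he2
        have h3 := congrArg Fin.val (hw.2.1 he2)
        simp at h3
        omega
      have hchain : (G.induce S').Reachable ⟨w ⟨1, by omega⟩, hw1⟩ ⟨w i, hwi⟩ := by
        refine reach_chain hadjfun (by omega) rfl (i.val - 1) i.2 (by omega) ?_ ?_
        · intro l hl h1 h2
          refine ⟨hw.1 _, ?_⟩
          simp only [Set.mem_singleton_iff]
          intro he2
          have h3 := congrArg Fin.val (hw.2.1 he2)
          simp at h3
          omega
        · congr 1
          all_goals exact Fin.ext (by simp only [Fin.val_mk]; omega)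
      apply hcr
      have : (⟨w i, hwi⟩ : ↥S') = c := Subtype.ext he.symm
      rw [← this]
      exact hchain
  exact ⟨c.val, csIsIP_prepend (by omega) hw c.2.1 hc1.symm hno hne⟩

end CSproof
namespace CSproof

variable {V : Type} [Fintype V] {G : SimpleGraph V}

/-- Lemma A : a minimum connected dominating set induces no path on `m+1 = k-1` vertices. -/
lemma no_long_path {Xn m : ℕ} (hfree' : ∀ w : Fin (m+2) → V, ¬ csIsIP G Set.univ w)
    (hmin : ∀ Y : Set V, IsConnDomSet G Y → Xn ≤ Y.ncard)
    {T : Set V} (hT : IsConnDomSet G T) (hcard : T.ncard = Xn)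
    {w : Fin (m+1) → V} (hw : csIsIP G T w) (hm : 1 ≤ m) : False := by
  have hn2 : 2 ≤ m + 1 := by omega
  by_cases hc : (G.induce (T \ {w ⟨0, by omega⟩})).Connected
  · obtain ⟨p, hpT, hpadj, hpriv⟩ := priv_front hmin hT hcard hn2 hw hc
    have hno : ∀ i : Fin (m+1), 0 < i.val → ¬ G.Adj p (w i) := by
      intro i hi hadj
      have h1 := hpriv _ (hw.1 i) hadj
      have h2 := congrArg Fin.val (hw.2.1 h1)
      simp only [Fin.val_mk] at h2
      omega
    have hne : ∀ i : Fin (m+1), p ≠ w i := fun i he => hpT (he ▸ hw.1 i)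
    exact hfree' _ (csIsIP_prepend (by omega) (csIsIP_mono (Set.subset_univ T) hw)
      (Set.mem_univ p) hpadj hno hne)
  · obtain ⟨c, hcIP⟩ := ext_front hT hn2 hw hc
    exact hfree' _ (csIsIP_mono (Set.subset_univ T) hcIP)

end CSproof
namespace CSproof

variable {V : Type} [Fintype V] {G : SimpleGraph V}

lemma snake {Xn m : ℕ} (hfree' : ∀ w : Fin (m+2) → V, ¬ csIsIP G Set.univ w) (hm : 2 ≤ m)
    (hmin : ∀ Y : Set V, IsConnDomSet G Y → Xn ≤ Y.ncard)
    {A : Set V} (hA : A.Nonempty) :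
    ∀ r : ℕ, ∀ T : Set V, ∀ w : Fin m → V, IsConnDomSet G T → T.ncard = Xn →
      csIsIP G T w → T = A ∪ Set.range w → (∀ x ∈ A, x ∉ Set.range w) →
      (∀ j : Fin m, j.val < m - r → ∀ x ∈ A, ¬ G.Adj (w j) x) → False := by
  intro r
  induction r with
  | zero =>
      intro T w hT hcard hw hTA hdisj hclean
      obtain ⟨x0, hx0⟩ := hA
      have hx0T : x0 ∈ T := hTA ▸ Or.inl hx0
      have hbT : w ⟨0, by omega⟩ ∈ T := hw.1 _
      have hbA : w ⟨0, by omega⟩ ∉ A := fun h => hdisj _ h ⟨_, rfl⟩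
      obtain ⟨wk⟩ := hT.2.preconnected ⟨x0, hx0T⟩ ⟨w ⟨0, by omega⟩, hbT⟩
      obtain ⟨u, x, huA, hxT, hxA, hadj⟩ := walk_cross wk hx0 hbA
      have hxr : x ∈ Set.range w := by
        rcases (hTA ▸ hxT : x ∈ A ∪ Set.range w) with h | h
        · exact absurd h hxA
        · exact h
      obtain ⟨j, hj⟩ := hxr
      exact hclean j (by omega) u huA (hj ▸ hadj.symm)
  | succ r ih =>
      intro T w hT hcard hw hTA hdisj hclean
      have hm1 : 1 ≤ m := by omega
      have hAT : A ⊆ T := fun a ha => hTA ▸ Or.inl ha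
      set xb := w ⟨m-1, by omega⟩ with hxbdef
      have hxbT : xb ∈ T := hw.1 _
      -- reversed path
      have hwrev : csIsIP G T (fun i : Fin m => w ⟨m - 1 - i.val, by have := i.2; omega⟩) :=
        csIsIP_rev hw
      -- back connectivity
      have hbc : (G.induce (T \ {xb})).Connected := by
        by_contra hbc
        obtain ⟨c, hcIP⟩ := ext_front hT hm hwrev (by exact hbc)
        exact no_long_path hfree' hmin hT hcard hcIP (by omega)
      -- front connectivity
      have hfc : (G.induce (T \ {w ⟨0, by omega⟩})).Connected := by
        by_contra hfc
        obtain ⟨c, hcIP⟩ := ext_front hT hm hw hfc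
        exact no_long_path hfree' hmin hT hcard hcIP (by omega)
      -- private neighbor of the front end
      obtain ⟨p, hpT, hpadj, hpriv⟩ := priv_front hmin hT hcard hm hw hfc
      -- the new set
      set T' := insert p (T \ {xb}) with hT'def
      have hw0ne : w ⟨0, by omega⟩ ≠ xb := by
        intro he
        have h2 := congrArg Fin.val (hw.2.1 he)
        simp only [Fin.val_mk] at h2
        omega
      have hw0T' : w ⟨0, by omega⟩ ∈ T \ {xb} := ⟨hw.1 _, hw0ne⟩
      -- connectivity of T'
      have hT'conn : (G.induce T').Connected := conn_insert hbc hw0T' hpadj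
      -- cardinality
      have hpTd : p ∉ T \ {xb} := fun h => hpT h.1
      have hT'card : T'.ncard = Xn := by
        rw [hT'def, Set.ncard_insert_of_notMem hpTd]
        rw [Set.ncard_diff_singleton_add_one hxbT]
        exact hcard
      -- domination of T'
      have hT'dom : IsDomSet G T' := by
        intro v hv
        by_cases hvxb : v = xb
        · -- xb is dominated by w (m-2)
          refine ⟨w ⟨m-2, by omega⟩, ?_, ?_⟩
          · apply Set.mem_insert_of_mem
            refine ⟨hw.1 _, fun he => ?_⟩
            have h2 := congrArg Fin.val (hw.2.1 he)
            simp only [Fin.val_mk] at h2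
            omega
          · rw [hvxb, hxbdef, hw.2.2]
            simp only [Fin.val_mk]
            right; omega
        · have hvT : v ∉ T := by
            intro h
            exact hv (Set.mem_insert_of_mem _ ⟨h, hvxb⟩)
          by_cases hex : ∃ u ∈ T \ {xb}, G.Adj v u
          · obtain ⟨u, hu1, hu2⟩ := hex
            exact ⟨u, Set.mem_insert_of_mem _ hu1, hu2⟩
          · push_neg at hex
            obtain ⟨u0, hu0T, hu0adj⟩ := hT.1 v hvT
            have hu0xb : u0 = xb := by
              by_contra hne
              exact hex u0 ⟨hu0T, hne⟩ hu0adj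
            have hvxbadj : G.Adj v xb := hu0xb ▸ hu0adj
            have hvpriv : ∀ t ∈ T, G.Adj v t → t = xb := by
              intro t ht hadj
              by_contra hne
              exact hex t ⟨ht, hne⟩ hadj
            -- pairing: v must be adjacent to p
            have hvp : G.Adj v p := by
              by_contra hvp
              -- build an induced path on m+2 vertices: p, w 0, ..., w (m-1), v
              have hu1 : csIsIP G Set.univ (fun i : Fin (m+1) =>
                  if h : i.val = 0 then p else w ⟨i.val - 1, by have := i.2; omega⟩) := by
                refine csIsIP_prepend (by omega) (csIsIP_mono (Set.subset_univ T) hw)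
                  (Set.mem_univ p) hpadj ?_ ?_
                · intro i hi hadj
                  have h1 := hpriv _ (hw.1 i) hadj
                  have h2 := congrArg Fin.val (hw.2.1 h1)
                  simp only [Fin.val_mk] at h2
                  omega
                · exact fun i he => hpT (he ▸ hw.1 i)
              have hu2 := csIsIP_append (n := m+1) (by omega) hu1 (Set.mem_univ v) ?_ ?_ ?_
              · exact hfree' _ hu2
              · -- last vertex of u1 is w (m-1) = xb, adjacent to v
                dsimp only
                split
                · rename_i hcond
                  omega
                · exact hvxbadj.symm
              · -- v is non-adjacent to all earlier vertices
                intro i hi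
                by_cases h0 : i.val = 0
                · rw [dif_pos h0]
                  exact fun h => hvp h
                · rw [dif_neg h0]
                  intro hadj
                  have h1 := hvpriv _ (hw.1 _) hadj
                  rw [hxbdef] at h1
                  have h2 := congrArg Fin.val (hw.2.1 h1)
                  simp only [Fin.val_mk] at h2
                  omega
              · -- v is distinct from all earlier vertices
                intro i
                by_cases h0 : i.val = 0
                · rw [dif_pos h0]
                  intro he
                  have : G.Adj v (w ⟨0, by omega⟩) := he ▸ hpadj
                  have h1 := hvpriv _ (hw.1 _) this
                  rw [hxbdef] at h1
                  have h2 := congrArg Fin.val (hw.2.1 h1)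
                  simp only [Fin.val_mk] at h2
                  omega
                · rw [dif_neg h0]
                  intro he
                  exact hvT (he ▸ hw.1 _)
            exact ⟨p, Set.mem_insert _ _, hvp⟩
      -- the new path
      set w' : Fin m → V := (fun j : Fin m =>
        if h : j.val = 0 then p else w ⟨j.val - 1, by have := j.2; omega⟩) with hw'def
      have hw'mem : ∀ j : Fin m, w' j ∈ T' := by
        intro j
        rw [hw'def]
        dsimp only
        by_cases h0 : j.val = 0
        · rw [dif_pos h0]; exact Set.mem_insert _ _
        · rw [dif_neg h0]
          apply Set.mem_insert_of_mem
          refine ⟨hw.1 _, fun he => ?_⟩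
          have h2 := congrArg Fin.val (hw.2.1 he)
          simp only [Fin.val_mk] at h2
          have := j.2
          omega
      have hw'IP : csIsIP G T' w' := by
        refine ⟨hw'mem, ?_, ?_⟩
        · intro i j hij
          rw [hw'def] at hij
          dsimp only at hij
          by_cases hi : i.val = 0 <;> by_cases hj : j.val = 0
          · exact Fin.ext (by omega)
          · rw [dif_pos hi, dif_neg hj] at hij
            exact absurd (show p ∈ T by rw [hij]; exact hw.1 _) hpT
          · rw [dif_neg hi, dif_pos hj] at hij
            exact absurd (show p ∈ T by rw [← hij]; exact hw.1 _) hpT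
          · rw [dif_neg hi, dif_neg hj] at hij
            have h4 := congrArg Fin.val (hw.2.1 hij)
            simp only [Fin.val_mk] at h4
            have h2 := i.2; have h3 := j.2
            exact Fin.ext (by omega)
        · intro i j
          rw [hw'def]
          dsimp only
          by_cases hi : i.val = 0 <;> by_cases hj : j.val = 0
          · rw [dif_pos hi, dif_pos hj]
            simp only [G.irrefl, false_iff]
            omega
          · rw [dif_pos hi, dif_neg hj]
            constructor
            · intro h
              have h1 := hpriv _ (hw.1 _) h
              have h2 := congrArg Fin.val (hw.2.1 h1)
              simp only [Fin.val_mk] at h2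
              left; omega
            · intro h
              have hj1 : j.val = 1 := by omega
              have he : (⟨j.val - 1, by have := j.2; omega⟩ : Fin m) = ⟨0, by omega⟩ := by
                apply Fin.ext; simp only [Fin.val_mk]; omega
              rw [he]; exact hpadj
          · rw [dif_neg hi, dif_pos hj]
            constructor
            · intro h
              have h1 := hpriv _ (hw.1 _) h.symm
              have h2 := congrArg Fin.val (hw.2.1 h1)
              simp only [Fin.val_mk] at h2
              right; omega
            · intro h
              have hi1 : i.val = 1 := by omega
              have he : (⟨i.val - 1, by have := i.2; omega⟩ : Fin m) = ⟨0, by omega⟩ := by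
                apply Fin.ext; simp only [Fin.val_mk]; omega
              rw [he]; exact hpadj.symm
          · rw [dif_neg hi, dif_neg hj, hw.2.2]
            simp only [Fin.val_mk]
            have h2 := i.2; have h3 := j.2
            constructor <;> (intro h; omega)
      -- set bookkeeping
      have hT'A : T' = A ∪ Set.range w' := by
        apply Set.ext
        intro y
        constructor
        · intro hy
          rcases Set.mem_insert_iff.mp hy with h1 | h1
          · right
            exact ⟨⟨0, by omega⟩, by rw [hw'def]; dsimp only; rw [dif_pos rfl]; exact h1.symm⟩
          · rcases (hTA ▸ h1.1 : y ∈ A ∪ Set.range w) with h2 | h2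
            · exact Or.inl h2
            · obtain ⟨j, hj⟩ := h2
              have hjne : j.val ≠ m - 1 := by
                intro he
                apply h1.2
                rw [hxbdef, ← hj]
                simp only [Set.mem_singleton_iff]
                congr 1
                exact Fin.ext (by simp [he])
              right
              refine ⟨⟨j.val + 1, by have := j.2; omega⟩, ?_⟩
              rw [hw'def]
              dsimp only
              split
              · rename_i hcond
                omega
              · rw [← hj]
                congr 1
                all_goals exact Fin.ext (by simp only [Fin.val_mk]; omega)
        · intro hy
          rcases hy with h1 | h1
          · exact Set.mem_insert_of_mem _ ⟨hAT h1, fun he => hdisj y h1 (by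
              rw [Set.mem_singleton_iff] at he
              exact he ▸ ⟨_, rfl⟩)⟩
          · obtain ⟨j, hj⟩ := h1
            rw [← hj]
            exact hw'mem j
      have hdisj' : ∀ x ∈ A, x ∉ Set.range w' := by
        intro x hx ⟨j, hj⟩
        rw [hw'def] at hj
        dsimp only at hj
        by_cases h0 : j.val = 0
        · rw [dif_pos h0] at hj
          exact hpT (hAT (hj ▸ hx))
        · rw [dif_neg h0] at hj
          exact hdisj x hx ⟨_, hj⟩
      have hclean' : ∀ j : Fin m, j.val < m - r → ∀ x ∈ A, ¬ G.Adj (w' j) x := by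
        intro j hjr x hx hadj
        rw [hw'def] at hadj
        dsimp only at hadj
        by_cases h0 : j.val = 0
        · rw [dif_pos h0] at hadj
          have h1 := hpriv _ (hAT hx) hadj
          exact hdisj x hx (h1 ▸ ⟨_, rfl⟩)
        · rw [dif_neg h0] at hadj
          exact hclean ⟨j.val - 1, by have := j.2; omega⟩ (by simp only [Fin.val_mk]; omega)
            x hx hadj
      exact ih T' w' ⟨hT'dom, hT'conn⟩ hT'card hw'IP hT'A hdisj' hclean'

end CSproof


theorem stmt0 {V : Type} [Fintype V] (G : SimpleGraph V) (k : ℕ) (hk : 4 ≤ k)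
    (hconn : G.Connected) (hfree : PFree G k) (X : Set V)
    (hX : IsMinimumConnDomSet G X) :
    PFree (G.induce X) (k - 2) ∨
      Nonempty ((G.induce X) ≃g SimpleGraph.pathGraph (k - 2)) := by
  obtain ⟨m, rfl⟩ : ∃ m, k = m + 2 := ⟨k - 2, by omega⟩
  have hm : 2 ≤ m := by omega
  have hk2 : m + 2 - 2 = m := by omega
  rw [hk2]
  by_cases hP : PFree (G.induce X) m
  · exact Or.inl hP
  right
  rw [PFree, not_not] at hP
  obtain ⟨f⟩ := hP
  set w₀ : Fin m → V := fun i => (f i).val with hw₀def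
  have hw₀ : csIsIP G X w₀ := by
    refine ⟨fun i => (f i).2, ?_, ?_⟩
    · intro i j hij
      exact f.injective (Subtype.ext hij)
    · intro i j
      rw [hw₀def]
      dsimp only
      have h1 : G.Adj (f i).val (f j).val ↔ (G.induce X).Adj (f i) (f j) := by
        constructor
        · exact fun h => CSproof.induce_adj_val h
        · exact fun h => CSproof.adj_of_induce_adj h
      rw [h1, f.map_rel_iff, SimpleGraph.pathGraph_adj]
  have hfree' : ∀ w : Fin (m+2) → V, ¬ csIsIP G Set.univ w :=
    CSproof.not_csIsIP_of_pfree hfree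
  by_cases hA : (X \ Set.range w₀).Nonempty
  · -- impossible by the snake argument
    exfalso
    have hTA : X = (X \ Set.range w₀) ∪ Set.range w₀ := by
      apply Set.ext
      intro y
      constructor
      · intro hy
        by_cases hr : y ∈ Set.range w₀
        · exact Or.inr hr
        · exact Or.inl ⟨hy, hr⟩
      · rintro (h | h)
        · exact h.1
        · obtain ⟨j, hj⟩ := h
          rw [← hj]
          exact hw₀.1 j
    exact CSproof.snake hfree' hm hX.2 hA m X w₀ hX.1 rfl hw₀ hTA
      (fun x hx => hx.2) (fun j hj => by omega)
  · -- X is exactly the path: build the isomorphism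
    have hXsub : ∀ x : ↥X, x.val ∈ Set.range w₀ := by
      intro x
      by_contra hx
      exact hA ⟨x.val, x.2, hx⟩
    have hbij : Function.Bijective (fun i : Fin m => (⟨w₀ i, hw₀.1 i⟩ : ↥X)) := by
      constructor
      · intro i j hij
        exact hw₀.2.1 (congrArg Subtype.val hij)
      · intro x
        obtain ⟨j, hj⟩ := hXsub x
        exact ⟨j, Subtype.ext hj⟩
    refine ⟨SimpleGraph.Iso.symm ⟨Equiv.ofBijective _ hbij, ?_⟩⟩
    intro a b
    show (G.induce X).Adj ⟨w₀ a, _⟩ ⟨w₀ b, _⟩ ↔ (SimpleGraph.pathGraph m).Adj a b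
    constructor
    · intro h
      rw [SimpleGraph.pathGraph_adj, ← hw₀.2.2]
      exact CSproof.adj_of_induce_adj h
    · intro h
      apply CSproof.induce_adj_val
      rw [hw₀.2.2]
      rw [SimpleGraph.pathGraph_adj] at h
      exact h
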